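/- Let G be a second-countable unimodular locally compact Hausdorff group with Haar measure μ_G, Γ a discrete subgroup, and φ ∈ L¹(G). Suppose there exists a Borel set C ⊆ G with ∫_C |φ| dμ_G > ∫_{G∖C} |φ| dμ_G and C·C⁻¹ ∩ Γ = {1}. Then the Poincaré series P_Γ φ(g) = Σ_{γ∈Γ} φ(γg) is not zero as an element of L¹(Γ\G). -/

import Mathlib

open MeasureTheory Pointwise
open scoped ENNReal NNReal

/-- Non-vanishing of Poincaré series: the function `g ↦ ∑_{γ ∈ Γ} φ(γ g)`, which
represents `P_Γ φ` as an element of `L¹(Γ\G)`, is not almost everywhere zero. -/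
theorem stmt_3 (G : Type*) [Group G] [TopologicalSpace G] [IsTopologicalGroup G]
    [LocallyCompactSpace G] [T2Space G] [SecondCountableTopology G]
    [MeasurableSpace G] [BorelSpace G]
    (μ : Measure G) [μ.IsHaarMeasure] [μ.IsMulRightInvariant]
    (Γ : Subgroup G) [DiscreteTopology Γ]
    (φ : G → ℂ) (hφ : Integrable φ μ)
    (C : Set G) (hC : MeasurableSet C)
    (hCC : C * C⁻¹ ∩ (Γ : Set G) = {1})
    (hbig : (∫ g in C, ‖φ g‖ ∂μ) > ∫ g in Cᶜ, ‖φ g‖ ∂μ) :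
    ¬ (∀ᵐ g ∂μ, (∑' γ : Γ, φ ((γ : G) * g)) = 0) := by
  classical
  intro hzero
  have hΓc : Countable Γ :=
    (TopologicalSpace.separableSpace_iff_countable (α := Γ)).mp inferInstance
  set f : G → ℝ≥0∞ := fun g => (‖φ g‖₊ : ℝ≥0∞) with hfdef
  have hφm : AEMeasurable f μ := hφ.aestronglyMeasurable.enorm
  -- key consequence of hCC
  have hkey : ∀ (γ : Γ) {c c' : G}, c ∈ C → c' ∈ C → (γ : G) * c = c' → γ = 1 := by
    intro γ c c' hc hc' h
    have hmem : (γ : G) ∈ C * C⁻¹ ∩ (Γ : Set G) := by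
      refine ⟨⟨c', hc', c⁻¹, Set.inv_mem_inv.mpr hc, ?_⟩, γ.2⟩
      rw [← h]; group
    rw [hCC] at hmem
    exact Subtype.ext hmem
  -- translated sets
  set S : Γ → Set G := fun γ => (γ : G) • C with hSdef
  have hSm : ∀ γ : Γ, MeasurableSet (S γ) := fun γ => hC.const_smul (γ : G)
  have hdisj : Pairwise (Function.onFun Disjoint S) := by
    intro γ γ' hne
    rw [Function.onFun, Set.disjoint_left]
    rintro x ⟨c, hc, rfl⟩ ⟨c', hc', hx⟩
    have h1 : ((γ'⁻¹ * γ : Γ) : G) * c = c' := by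
      push_cast
      have hx' : (γ' : G) * c' = (γ : G) * c := by simpa [smul_eq_mul] using hx
      rw [mul_assoc, ← hx']; group
    have := hkey (γ'⁻¹ * γ) hc hc' h1
    exact hne (by rwa [inv_mul_eq_one, eq_comm] at this)
  have hsub : ∀ γ : Γ, γ ≠ 1 → S γ ⊆ Cᶜ := by
    intro γ hγ x hx hxC
    rcases hx with ⟨c, hc, rfl⟩
    exact hγ (hkey γ hc hxC rfl)
  -- change of variables
  have hcov : ∀ γ : Γ, ∫⁻ g in C, f ((γ : G) * g) ∂μ = ∫⁻ x in S γ, f x ∂μ := by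
    intro γ
    have h := (measurePreserving_mul_left μ (γ : G)).setLIntegral_comp_emb
      (measurableEmbedding_const_smul (γ : G)) f C
    have himg : (fun g => (γ : G) * g) '' C = S γ := by
      ext x
      simp only [hSdef, Set.mem_image, Set.mem_smul_set, smul_eq_mul]
    rw [himg] at h
    exact h
  -- a.e. measurability of each translate
  have hmγ : ∀ γ : Γ, AEMeasurable (fun g => f ((γ : G) * g)) μ := fun γ =>
    hφm.comp_quasiMeasurePreserving (measurePreserving_mul_left μ (γ : G)).quasiMeasurePreserving
  -- finiteness of the absolute series over C
  have hfin : ∫⁻ g in C, ∑' γ : Γ, f ((γ : G) * g) ∂μ < ⊤ := by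
    rw [lintegral_tsum fun γ => (hmγ γ).restrict]
    calc ∑' γ : Γ, ∫⁻ g in C, f ((γ : G) * g) ∂μ
        = ∑' γ : Γ, ∫⁻ x in S γ, f x ∂μ := tsum_congr fun γ => hcov γ
      _ = ∫⁻ x in ⋃ γ : Γ, S γ, f x ∂μ := (lintegral_iUnion hSm hdisj f).symm
      _ ≤ ∫⁻ x, f x ∂μ := setLIntegral_le_lintegral _ _
      _ < ⊤ := hφ.2
  have hae_sum : ∀ᵐ g ∂μ.restrict C, (∑' γ : Γ, f ((γ : G) * g)) < ⊤ :=
    ae_lt_top' (AEMeasurable.ennreal_tsum fun γ => (hmγ γ).restrict) hfin.ne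
  have hz' : ∀ᵐ g ∂μ.restrict C, (∑' γ : Γ, φ ((γ : G) * g)) = 0 :=
    ae_restrict_of_ae hzero
  -- pointwise bound a.e. on C
  have hpt : ∀ᵐ g ∂μ.restrict C,
      f g ≤ ∑' γ : Γ, (if γ = 1 then 0 else f ((γ : G) * g)) := by
    filter_upwards [hae_sum, hz'] with g hg hz
    have hsumnn : Summable fun γ : Γ => ‖φ ((γ : G) * g)‖₊ :=
      ENNReal.tsum_coe_ne_top_iff_summable.mp hg.ne
    have hsum : Summable fun γ : Γ => φ ((γ : G) * g) := hsumnn.of_nnnorm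
    have h1 := Summable.tsum_eq_add_tsum_ite hsum 1
    rw [hz, OneMemClass.coe_one, one_mul] at h1
    have hφg : φ g = -∑' γ : Γ, ite (γ = 1) 0 (φ ((γ : G) * g)) :=
      eq_neg_of_add_eq_zero_left h1.symm
    have hsumite : Summable fun γ : Γ => ‖ite (γ = 1) 0 (φ ((γ : G) * g))‖₊ := by
      refine NNReal.summable_of_le (fun γ => ?_) hsumnn
      split_ifs <;> simp
    have hnn : ‖φ g‖₊ ≤ ∑' γ : Γ, ‖ite (γ = 1) 0 (φ ((γ : G) * g))‖₊ := by
      rw [hφg, nnnorm_neg]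
      exact nnnorm_tsum_le hsumite
    calc f g = (‖φ g‖₊ : ℝ≥0∞) := rfl
      _ ≤ ((∑' γ : Γ, ‖ite (γ = 1) 0 (φ ((γ : G) * g))‖₊ : ℝ≥0) : ℝ≥0∞) := by
          exact_mod_cast hnn
      _ = ∑' γ : Γ, ((‖ite (γ = 1) 0 (φ ((γ : G) * g))‖₊ : ℝ≥0) : ℝ≥0∞) :=
          ENNReal.coe_tsum hsumite
      _ = ∑' γ : Γ, (if γ = 1 then 0 else f ((γ : G) * g)) := by
          refine tsum_congr fun γ => ?_
          split_ifs <;> simp [hfdef]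
  -- the main estimate
  set S' : Γ → Set G := fun γ => if γ = 1 then ∅ else S γ with hS'def
  have hS'm : ∀ γ : Γ, MeasurableSet (S' γ) := by
    intro γ
    by_cases h : γ = 1
    · simp [hS'def, h]
    · simpa [hS'def, h] using hSm γ
  have hS'disj : Pairwise (Function.onFun Disjoint S') := by
    intro γ γ' hne
    rw [Function.onFun]
    rcases eq_or_ne γ 1 with h | h
    · simp [hS'def, h]
    · rcases eq_or_ne γ' 1 with h' | h'
      · simp [hS'def, h, h']
      · simpa [hS'def, h, h'] using hdisj hne
  have hS'sub : (⋃ γ : Γ, S' γ) ⊆ Cᶜ := by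
    rw [Set.iUnion_subset_iff]
    intro γ
    by_cases h : γ = 1
    · simp [hS'def, h]
    · simpa [hS'def, h] using hsub γ h
  have hmain : ∫⁻ g in C, f g ∂μ ≤ ∫⁻ g in Cᶜ, f g ∂μ := by
    calc ∫⁻ g in C, f g ∂μ
        ≤ ∫⁻ g in C, ∑' γ : Γ, (if γ = 1 then 0 else f ((γ : G) * g)) ∂μ :=
          lintegral_mono_ae hpt
      _ = ∑' γ : Γ, ∫⁻ g in C, (if γ = 1 then 0 else f ((γ : G) * g)) ∂μ := by
          refine lintegral_tsum fun γ => ?_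
          split_ifs
          · exact aemeasurable_const
          · exact (hmγ γ).restrict
      _ = ∑' γ : Γ, ∫⁻ x in S' γ, f x ∂μ := by
          refine tsum_congr fun γ => ?_
          by_cases h : γ = 1
          · simp [hS'def, h]
          · simpa [hS'def, h] using hcov γ
      _ = ∫⁻ x in ⋃ γ : Γ, S' γ, f x ∂μ := (lintegral_iUnion hS'm hS'disj f).symm
      _ ≤ ∫⁻ x in Cᶜ, f x ∂μ := lintegral_mono_set hS'sub
  -- contradiction with hbig
  have hintC : ∫ g in C, ‖φ g‖ ∂μ = (∫⁻ g in C, f g ∂μ).toReal :=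
    integral_norm_eq_lintegral_enorm (hφ.aestronglyMeasurable.restrict)
  have hintCc : ∫ g in Cᶜ, ‖φ g‖ ∂μ = (∫⁻ g in Cᶜ, f g ∂μ).toReal :=
    integral_norm_eq_lintegral_enorm (hφ.aestronglyMeasurable.restrict)
  have hCcfin : ∫⁻ g in Cᶜ, f g ∂μ ≠ ⊤ :=
    ((setLIntegral_le_lintegral _ _).trans_lt hφ.2).ne
  have : ∫ g in C, ‖φ g‖ ∂μ ≤ ∫ g in Cᶜ, ‖φ g‖ ∂μ := by
    rw [hintC, hintCc]
    exact ENNReal.toReal_mono hCcfin hmain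
  linarith [hbig]
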